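/- Let d ≥ 3 and let u : ℝ × ℝ^d → ℝ^d be a smooth real Schur flow satisfying the barotropic Euler equation with smooth potential Π. For an even integer n = 2i ≤ d, define the partial-sum vorticity 2-form ω^{(n)} by ω^{(n)}_{jk} = ∂_j u_k − ∂_k u_j if both j ≤ n and k ≤ n, and ω^{(n)}_{jk} = 0 otherwise. Then ω^{(n)} is Lie-transported by the full velocity u: for all j, k ≤ d, ∂_t ω^{(n)}_{jk} + Σ_{m=1}^{d} ( u_m ∂_m ω^{(n)}_{jk} + ω^{(n)}_{mk} ∂_j u_m + ω^{(n)}_{jm} ∂_k u_m ) = 0. -/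

import Mathlib

/-- Partial derivative in time of a function on `ℝ × ℝ^d`. -/
noncomputable def pdt {d : ℕ} (f : ℝ × (Fin d → ℝ) → ℝ) (p : ℝ × (Fin d → ℝ)) : ℝ :=
  fderiv ℝ f p (1, 0)

/-- Partial derivative in the `j`-th spatial coordinate of a function on `ℝ × ℝ^d`. -/
noncomputable def pdx {d : ℕ} (j : Fin d) (f : ℝ × (Fin d → ℝ) → ℝ) (p : ℝ × (Fin d → ℝ)) : ℝ :=
  fderiv ℝ f p (0, Pi.single j 1)

/-- Real Schur flow: with 1-based indices `J = j+1`, `K = k+1`, we have `∂_J u_K = 0`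
whenever `J > 2⌈K/2⌉`; here `⌈K/2⌉ = (K+1)/2` in natural-number division. -/
def IsRSF {d : ℕ} (u : Fin d → ℝ × (Fin d → ℝ) → ℝ) : Prop :=
  ∀ j k : Fin d, 2 * (((k : ℕ) + 1 + 1) / 2) < (j : ℕ) + 1 → ∀ p, pdx j (u k) p = 0


/-- Directional derivative in direction `v`. -/
noncomputable def pdv {d : ℕ} (v : ℝ × (Fin d → ℝ)) (f : ℝ × (Fin d → ℝ) → ℝ)
    (p : ℝ × (Fin d → ℝ)) : ℝ := fderiv ℝ f p v

lemma pdt_pdv {d : ℕ} (f : ℝ × (Fin d → ℝ) → ℝ) : pdt f = pdv (1, 0) f := rfl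
lemma pdx_pdv {d : ℕ} (j : Fin d) (f : ℝ × (Fin d → ℝ) → ℝ) :
    pdx j f = pdv (0, Pi.single j 1) f := rfl

lemma smooth_diffAt {d : ℕ} {f : ℝ × (Fin d → ℝ) → ℝ} (hf : ContDiff ℝ (⊤ : ℕ∞) f)
    (p : ℝ × (Fin d → ℝ)) : DifferentiableAt ℝ f p := by
  have h1 : ((1 : ℕ∞) : WithTop ℕ∞) ≤ ((⊤ : ℕ∞) : WithTop ℕ∞) := WithTop.coe_le_coe.2 le_top
  exact (hf.differentiable (by simp)).differentiableAt

lemma pdv_smooth {d : ℕ} {f : ℝ × (Fin d → ℝ) → ℝ} (hf : ContDiff ℝ (⊤ : ℕ∞) f)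
    (v : ℝ × (Fin d → ℝ)) : ContDiff ℝ (⊤ : ℕ∞) (pdv v f) := by
  have h1 : ContDiff ℝ (⊤ : ℕ∞) (fderiv ℝ f) :=
    hf.fderiv_right ((WithTop.coe_le_coe.2 (le_top : (⊤ : ℕ∞) + 1 ≤ ⊤)).trans_eq rfl)
  exact (ContinuousLinearMap.apply ℝ ℝ v).contDiff.comp h1

lemma pdv_add {d : ℕ} {f g : ℝ × (Fin d → ℝ) → ℝ} {p}
    (hf : DifferentiableAt ℝ f p) (hg : DifferentiableAt ℝ g p) (v) :
    pdv v (fun q => f q + g q) p = pdv v f p + pdv v g p := by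
  simp [pdv, fderiv_fun_add hf hg]

lemma pdv_sub {d : ℕ} {f g : ℝ × (Fin d → ℝ) → ℝ} {p}
    (hf : DifferentiableAt ℝ f p) (hg : DifferentiableAt ℝ g p) (v) :
    pdv v (fun q => f q - g q) p = pdv v f p - pdv v g p := by
  simp [pdv, fderiv_fun_sub hf hg]

lemma pdv_mul {d : ℕ} {f g : ℝ × (Fin d → ℝ) → ℝ} {p}
    (hf : DifferentiableAt ℝ f p) (hg : DifferentiableAt ℝ g p) (v) :
    pdv v (fun q => f q * g q) p = f p * pdv v g p + g p * pdv v f p := by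
  simp [pdv, fderiv_fun_mul hf hg]

lemma pdv_sum {d : ℕ} {ι : Type*} {s : Finset ι} {f : ι → ℝ × (Fin d → ℝ) → ℝ} {p}
    (hf : ∀ m ∈ s, DifferentiableAt ℝ (f m) p) (v) :
    pdv v (fun q => ∑ m ∈ s, f m q) p = ∑ m ∈ s, pdv v (f m) p := by
  simp [pdv, fderiv_fun_sum hf]

lemma pdv_comm {d : ℕ} {f : ℝ × (Fin d → ℝ) → ℝ} (hf : ContDiff ℝ (⊤ : ℕ∞) f)
    (v w p) : pdv w (pdv v f) p = pdv v (pdv w f) p := by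
  have hdf : ContDiff ℝ (⊤ : ℕ∞) (fderiv ℝ f) :=
    hf.fderiv_right ((WithTop.coe_le_coe.2 (le_top : (⊤ : ℕ∞) + 1 ≤ ⊤)).trans_eq rfl)
  have key : ∀ a b : ℝ × (Fin d → ℝ),
      pdv b (pdv a f) p = fderiv ℝ (fderiv ℝ f) p b a := by
    intro a b
    have h1 : ((1 : ℕ∞) : WithTop ℕ∞) ≤ ((⊤ : ℕ∞) : WithTop ℕ∞) := WithTop.coe_le_coe.2 le_top
    have h := fderiv_clm_apply (c := fderiv ℝ f) (u := fun _ => a) (x := p)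
      ((hdf.differentiable (by simp)).differentiableAt) (differentiableAt_const a)
    have e : pdv a f = fun q => (fderiv ℝ f q) ((fun _ => a) q) := rfl
    show fderiv ℝ (pdv a f) p b = _
    rw [e, h]
    simp
  rw [key v w, key w v]
  exact (hf.contDiffAt.isSymmSndFDerivAt
    (by rw [minSmoothness_of_isRCLikeNormedField]; exact (WithTop.coe_le_coe.2 (le_top : (2:ℕ∞) ≤ ⊤)).trans_eq rfl)) w v

/-- The differentiated Euler equation. -/
lemma euler_d {d : ℕ} {u : Fin d → ℝ × (Fin d → ℝ) → ℝ} {P : ℝ × (Fin d → ℝ) → ℝ}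
    (hu : ∀ k, ContDiff ℝ (⊤ : ℕ∞) (u k)) (hP : ContDiff ℝ (⊤ : ℕ∞) P)
    (heuler : ∀ k p, pdt (u k) p + ∑ j, u j p * pdx j (u k) p = -(pdx k P p))
    (k : Fin d) (v : ℝ × (Fin d → ℝ)) (p : ℝ × (Fin d → ℝ)) :
    pdv v (pdv (1, 0) (u k)) p
      + ∑ m, (pdv v (u m) p * pdv (0, Pi.single m 1) (u k) p
          + u m p * pdv v (pdv (0, Pi.single m 1) (u k)) p)
      + pdv v (pdv (0, Pi.single k 1) P) p = 0 := by
  simp only [pdt_pdv, pdx_pdv] at heuler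
  have hfun : (fun q => pdv (1, 0) (u k) q + (∑ m, u m q * pdv (0, Pi.single m 1) (u k) q)
      + pdv (0, Pi.single k 1) P q) = fun _ => (0 : ℝ) := by
    funext q; have := heuler k q; linarith
  have h0 : pdv v (fun q => pdv (1, 0) (u k) q
      + (∑ m, u m q * pdv (0, Pi.single m 1) (u k) q)
      + pdv (0, Pi.single k 1) P q) p = 0 := by
    rw [hfun]; simp [pdv]
  have hsumd : ∀ m ∈ (Finset.univ : Finset (Fin d)),
      DifferentiableAt ℝ (fun q => u m q * pdv (0, Pi.single m 1) (u k) q) p :=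
    fun m _ => (smooth_diffAt (hu m) p).mul (smooth_diffAt (pdv_smooth (hu k) _) p)
  have hd1 : DifferentiableAt ℝ (pdv ((1:ℝ), (0 : Fin d → ℝ)) (u k)) p :=
    smooth_diffAt (pdv_smooth (hu k) _) p
  have hd2 : DifferentiableAt ℝ
      (fun q => ∑ m, u m q * pdv (0, Pi.single m 1) (u k) q) p :=
    DifferentiableAt.fun_sum hsumd
  have hd3 : DifferentiableAt ℝ (pdv ((0:ℝ), Pi.single k (1:ℝ)) P) p :=
    smooth_diffAt (pdv_smooth hP _) p
  rw [pdv_add (hd1.fun_add hd2) hd3, pdv_add hd1 hd2, pdv_sum hsumd] at h0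
  have hcong : ∀ m ∈ (Finset.univ : Finset (Fin d)),
      pdv v (fun q => u m q * pdv (0, Pi.single m 1) (u k) q) p
        = pdv v (u m) p * pdv (0, Pi.single m 1) (u k) p
          + u m p * pdv v (pdv (0, Pi.single m 1) (u k)) p := by
    intro m _
    rw [pdv_mul (smooth_diffAt (hu m) p) (smooth_diffAt (pdv_smooth (hu k) _) p)]
    ring
  rw [Finset.sum_congr rfl hcong] at h0
  linarith

/-- for a real Schur flow solving the barotropic Euler equation, the partial-sum
vorticity `ω^{(n)}`, `n = 2i ≤ d` (the vorticity of the first `n` components, extended by zero),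
is Lie-transported by the full velocity `u`. -/
theorem rsf_partial_vorticity_lie_transport
    {d : ℕ} (hd : 3 ≤ d)
    (u : Fin d → ℝ × (Fin d → ℝ) → ℝ) (P : ℝ × (Fin d → ℝ) → ℝ)
    (hu : ∀ k, ContDiff ℝ (⊤ : ℕ∞) (u k)) (hP : ContDiff ℝ (⊤ : ℕ∞) P)
    (hRSF : IsRSF u)
    (heuler : ∀ k p, pdt (u k) p + ∑ j, u j p * pdx j (u k) p = -(pdx k P p))
    (i : ℕ) (hi : 1 ≤ i) (hn : 2 * i ≤ d)
    (ω : Fin d → Fin d → ℝ × (Fin d → ℝ) → ℝ)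
    (hω : ∀ j k p, ω j k p =
      if (j : ℕ) < 2 * i ∧ (k : ℕ) < 2 * i then pdx j (u k) p - pdx k (u j) p else 0) :
    ∀ j k p, pdt (ω j k) p
      + ∑ m, (u m p * pdx m (ω j k) p + ω m k p * pdx j (u m) p + ω j m p * pdx k (u m) p)
      = 0 := by
  have hRSF' : ∀ (l m : Fin d), (m : ℕ) < 2 * i → 2 * i ≤ (l : ℕ) → ∀ q,
      pdv (0, Pi.single l 1) (u m) q = 0 := by
    intro l m hm hl q
    exact hRSF l m (by omega) q
  intro j k p
  simp only [pdt_pdv, pdx_pdv]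
  simp only [pdx_pdv] at hω
  by_cases hjk : (j : ℕ) < 2 * i ∧ (k : ℕ) < 2 * i
  · -- both indices below n = 2i : partial vorticity equals full vorticity here
    have hωf : ω j k = fun q =>
        pdv (0, Pi.single j 1) (u k) q - pdv (0, Pi.single k 1) (u j) q := by
      funext q; rw [hω j k q, if_pos hjk]
    have hsub : ∀ (v : ℝ × (Fin d → ℝ)),
        pdv v (ω j k) p = pdv v (pdv (0, Pi.single j 1) (u k)) p
          - pdv v (pdv (0, Pi.single k 1) (u j)) p := by
      intro v
      rw [hωf]
      exact pdv_sub (smooth_diffAt (pdv_smooth (hu k) _) p)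
        (smooth_diffAt (pdv_smooth (hu j) _) p) v
    have hterm : ∀ m ∈ (Finset.univ : Finset (Fin d)),
        u m p * pdv (0, Pi.single m 1) (ω j k) p
          + ω m k p * pdv (0, Pi.single j 1) (u m) p
          + ω j m p * pdv (0, Pi.single k 1) (u m) p
        = (pdv (0, Pi.single j 1) (u m) p * pdv (0, Pi.single m 1) (u k) p
            + u m p * pdv (0, Pi.single j 1) (pdv (0, Pi.single m 1) (u k)) p)
          - (pdv (0, Pi.single k 1) (u m) p * pdv (0, Pi.single m 1) (u j) p
            + u m p * pdv (0, Pi.single k 1) (pdv (0, Pi.single m 1) (u j)) p) := by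
      intro m _
      rw [hsub (0, Pi.single m 1),
        pdv_comm (hu k) (0, Pi.single m 1) (0, Pi.single j 1) p,
        pdv_comm (hu j) (0, Pi.single m 1) (0, Pi.single k 1) p]
      by_cases hm : (m : ℕ) < 2 * i
      · rw [hω m k p, hω j m p, if_pos ⟨hm, hjk.2⟩, if_pos ⟨hjk.1, hm⟩]; ring
      · rw [hω m k p, hω j m p, if_neg (by tauto), if_neg (by tauto),
          hRSF' m k hjk.2 (by omega) p, hRSF' m j hjk.1 (by omega) p]
        ring
    rw [hsub (1, 0), Finset.sum_congr rfl hterm, Finset.sum_sub_distrib]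
    have e1 := euler_d hu hP heuler k (0, Pi.single j 1) p
    have e2 := euler_d hu hP heuler j (0, Pi.single k 1) p
    rw [pdv_comm (hu k) (1, 0) (0, Pi.single j 1) p,
      pdv_comm hP (0, Pi.single k 1) (0, Pi.single j 1) p] at e1
    rw [pdv_comm (hu j) (1, 0) (0, Pi.single k 1) p] at e2
    linarith
  · -- ω j k is identically zero
    have hωf : ω j k = fun _ => (0 : ℝ) := by
      funext q; rw [hω j k q, if_neg hjk]
    have hz : ∀ v, pdv v (ω j k) p = 0 := by
      intro v; rw [hωf]; simp [pdv]
    rw [hz (1, 0)]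
    have hterm : ∀ m ∈ (Finset.univ : Finset (Fin d)),
        u m p * pdv (0, Pi.single m 1) (ω j k) p
          + ω m k p * pdv (0, Pi.single j 1) (u m) p
          + ω j m p * pdv (0, Pi.single k 1) (u m) p = 0 := by
      intro m _
      rw [hz (0, Pi.single m 1)]
      rcases not_and_or.mp hjk with hj | hk
      · have hωjm : ω j m p = 0 := by rw [hω j m p]; exact if_neg (by tauto)
        by_cases hm : (m : ℕ) < 2 * i
        · rw [hRSF' j m hm (by omega) p, hωjm]; ring
        · have hωmk : ω m k p = 0 := by rw [hω m k p]; exact if_neg (by tauto)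
          rw [hωmk, hωjm]; ring
      · have hωmk : ω m k p = 0 := by rw [hω m k p]; exact if_neg (by tauto)
        by_cases hm : (m : ℕ) < 2 * i
        · rw [hRSF' k m hm (by omega) p, hωmk]; ring
        · have hωjm : ω j m p = 0 := by rw [hω j m p]; exact if_neg (by tauto)
          rw [hωmk, hωjm]; ring
    rw [Finset.sum_eq_zero hterm]
    ring
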